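/- Assume (H1), (H3) and (H4). Then for every q ∈ Q and every u₀ ∈ 𝔄(q) there exists exactly one amenable complete trajectory at q passing through u₀ at time 0. -/

import Mathlib

open MeasureTheory Set Bornology Filter Topology RealInnerProductSpace

noncomputable section

variable {Q H : Type*}

section Defs
variable [MetricSpace Q] [NormedAddCommGroup H] [InnerProductSpace ℝ H] [CompleteSpace H]

def IsFlow (ϑ : ℝ → Q → Q) : Prop :=
  (∀ q, ϑ 0 q = q) ∧ (∀ t s q, ϑ (t + s) q = ϑ t (ϑ s q)) ∧
    Continuous fun p : ℝ × Q => ϑ p.1 p.2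

def IsCocycle (ϑ : ℝ → Q → Q) (ψ : ℝ → Q → H → H) : Prop :=
  (∀ q u, ψ 0 q u = u) ∧
  (∀ t s : ℝ, 0 ≤ t → 0 ≤ s → ∀ q u, ψ (t + s) q u = ψ t (ϑ s q) (ψ s q u)) ∧
  ContinuousOn (fun p : ℝ × Q × H => ψ p.1 p.2.1 p.2.2) {p : ℝ × Q × H | 0 ≤ p.1}

def IsCompleteTraj (ϑ : ℝ → Q → Q) (ψ : ℝ → Q → H → H) (q : Q) (u : ℝ → H) : Prop :=
  Continuous u ∧ ∀ t s : ℝ, 0 ≤ t → u (t + s) = ψ t (ϑ s q) (u s)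

def IsAmenable (ν : ℝ) (u : ℝ → H) : Prop :=
  IntegrableOn (fun s : ℝ => Real.exp (2 * ν * s) * ‖u s‖ ^ 2) (Set.Iic (0:ℝ))

def amenSet (ϑ : ℝ → Q → Q) (ψ : ℝ → Q → H → H) (ν : ℝ) (q : Q) : Set H :=
  {u₀ | ∃ u : ℝ → H, IsCompleteTraj ϑ ψ q u ∧ IsAmenable ν u ∧ u 0 = u₀}

structure HypH1 (P : H →L[ℝ] H) (Hplus Hminus : Submodule ℝ H) : Prop where
  selfAdj : IsSelfAdjoint P
  closed_plus : IsClosed (Hplus : Set H)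
  orth : Hminus = Hplusᗮ
  inv_plus : ∀ u ∈ Hplus, P u ∈ Hplus
  inv_minus : ∀ u ∈ Hminus, P u ∈ Hminus
  pos : ∀ u ∈ Hplus, u ≠ 0 → (0:ℝ) < ⟪P u, u⟫
  neg : ∀ u ∈ Hminus, u ≠ 0 → ⟪P u, u⟫ < 0

def HypH2 (Hminus : Submodule ℝ H) (j : ℕ) : Prop :=
  FiniteDimensional ℝ Hminus ∧ Module.finrank ℝ Hminus = j

def HypH3 (ψ : ℝ → Q → H → H) (P : H →L[ℝ] H) (δ ν : ℝ) : Prop :=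
  0 < δ ∧ 0 < ν ∧ ∀ (q : Q) (u v : H) (l r : ℝ), 0 ≤ l → l ≤ r →
    Real.exp (2 * ν * r) * ⟪P (ψ r q u - ψ r q v), ψ r q u - ψ r q v⟫ -
      Real.exp (2 * ν * l) * ⟪P (ψ l q u - ψ l q v), ψ l q u - ψ l q v⟫ ≤
      -δ * ∫ s in l..r, Real.exp (2 * ν * s) * ‖ψ s q u - ψ s q v‖ ^ 2

def IsOrthProjOnto (Hminus : Submodule ℝ H) (Pi : H →L[ℝ] H) : Prop :=
  (∀ u, Pi u ∈ Hminus) ∧ ∀ u, u - Pi u ∈ Hminusᗮ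

def HypCOM2 (ψ : ℝ → Q → H → H) : Prop :=
  ∃ tc : ℝ, 0 < tc ∧ ∀ (q : Q) (s : Set H), IsBounded s → IsCompact (closure (ψ tc q '' s))

def HypCOM3 (ψ : ℝ → Q → H → H) : Prop :=
  ∀ (q : Q) (u₀ : H), IsBounded ((fun t => ψ t q u₀) '' Set.Ici (0:ℝ)) →
    IsCompact (closure ((fun t => ψ t q u₀) '' Set.Ici (0:ℝ)))

def LyapunovStable (ψ : ℝ → Q → H → H) (q : Q) (v : ℝ → H) : Prop :=
  ∀ ε > 0, ∃ η > 0, ∀ u₀ : H, ‖u₀ - v 0‖ < η → ∀ t ≥ 0, ‖ψ t q u₀ - v t‖ < ε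

omit [CompleteSpace H] in
theorem amen_traj_eq
    (ϑ : ℝ → Q → Q) (ψ : ℝ → Q → H → H) (hcoc : IsCocycle ϑ ψ)
    (P : H →L[ℝ] H) (δ ν : ℝ) (h3 : HypH3 ψ P δ ν)
    (q : Q) (u v : ℝ → H)
    (hu : IsCompleteTraj ϑ ψ q u) (hv : IsCompleteTraj ϑ ψ q v)
    (hua : IsAmenable ν u) (hva : IsAmenable ν v)
    (h0 : u 0 = v 0) : u = v := by
  obtain ⟨hδ, hν, hH3⟩ := h3
  have hw0 : u 0 - v 0 = 0 := sub_eq_zero.mpr h0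
  set f : ℝ → ℝ := fun t => Real.exp (2 * ν * t) * ‖u t - v t‖ ^ 2 with hfdef
  have hf_cont : Continuous f := by
    apply Continuous.mul
    · exact Real.continuous_exp.comp (continuous_const.mul continuous_id)
    · exact ((hu.1.sub hv.1).norm).pow 2
  have hf_nonneg : ∀ t, 0 ≤ f t := fun t => mul_nonneg (Real.exp_pos _).le (sq_nonneg _)
  have hf_int : IntegrableOn f (Set.Iic (0:ℝ)) := by
    have hsum : IntegrableOn
        (fun s : ℝ => 2 * (Real.exp (2 * ν * s) * ‖u s‖ ^ 2) +
          2 * (Real.exp (2 * ν * s) * ‖v s‖ ^ 2)) (Set.Iic (0:ℝ)) :=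
      (hua.const_mul 2).add (hva.const_mul 2)
    refine Integrable.mono hsum (hf_cont.aestronglyMeasurable.restrict) ?_
    refine Filter.Eventually.of_forall fun s => ?_
    rw [Real.norm_eq_abs, Real.norm_eq_abs, abs_of_nonneg (hf_nonneg s)]
    have h1 : ‖u s - v s‖ ≤ ‖u s‖ + ‖v s‖ := norm_sub_le _ _
    have he := (Real.exp_pos (2 * ν * s)).le
    have h2 : ‖u s - v s‖ ^ 2 ≤ 2 * ‖u s‖ ^ 2 + 2 * ‖v s‖ ^ 2 := by
      nlinarith [norm_nonneg (u s - v s), norm_nonneg (u s), norm_nonneg (v s),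
        sq_nonneg (‖u s‖ - ‖v s‖)]
    have h3' : f s ≤ 2 * (Real.exp (2 * ν * s) * ‖u s‖ ^ 2) +
        2 * (Real.exp (2 * ν * s) * ‖v s‖ ^ 2) := by
      simp only [hfdef]
      nlinarith [h2, he]
    calc f s ≤ 2 * (Real.exp (2 * ν * s) * ‖u s‖ ^ 2) +
        2 * (Real.exp (2 * ν * s) * ‖v s‖ ^ 2) := h3'
      _ ≤ |2 * (Real.exp (2 * ν * s) * ‖u s‖ ^ 2) +
          2 * (Real.exp (2 * ν * s) * ‖v s‖ ^ 2)| := le_abs_self _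
  set g : ℝ → ℝ := fun t => Real.exp (2 * ν * t) * ⟪P (u t - v t), u t - v t⟫ with hgdef
  -- key monotonicity inequality
  have hkey : ∀ a b : ℝ, a ≤ b → g b - g a ≤ -δ * ∫ t in a..b, f t := by
    intro a b hab
    have h1 := hH3 (ϑ a q) (u a) (v a) 0 (b - a) le_rfl (by linarith)
    have ebu : ψ (b - a) (ϑ a q) (u a) = u b := by
      have h := hu.2 (b - a) a (by linarith)
      rw [show b - a + a = b by ring] at h
      exact h.symm
    have ebv : ψ (b - a) (ϑ a q) (v a) = v b := by
      have h := hv.2 (b - a) a (by linarith)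
      rw [show b - a + a = b by ring] at h
      exact h.symm
    have e0u : ψ 0 (ϑ a q) (u a) = u a := hcoc.1 _ _
    have e0v : ψ 0 (ϑ a q) (v a) = v a := hcoc.1 _ _
    rw [ebu, ebv, e0u, e0v] at h1
    have hint_eq : (∫ s in (0:ℝ)..(b - a),
          Real.exp (2 * ν * s) * ‖ψ s (ϑ a q) (u a) - ψ s (ϑ a q) (v a)‖ ^ 2)
        = ∫ s in (0:ℝ)..(b - a), Real.exp (2 * ν * s) * ‖u (s + a) - v (s + a)‖ ^ 2 := by
      apply intervalIntegral.integral_congr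
      intro s hs
      rw [Set.uIcc_of_le (by linarith : (0:ℝ) ≤ b - a)] at hs
      simp only [hu.2 s a hs.1, hv.2 s a hs.1]
    rw [hint_eq] at h1
    simp only [mul_zero, Real.exp_zero, one_mul] at h1
    have hE := (Real.exp_pos (2 * ν * a)).le
    have h2 := mul_le_mul_of_nonneg_left h1 hE
    have hI : Real.exp (2 * ν * a) *
        (-δ * ∫ s in (0:ℝ)..(b - a), Real.exp (2 * ν * s) * ‖u (s + a) - v (s + a)‖ ^ 2)
        = -δ * ∫ t in a..b, f t := by
      have step1 : Real.exp (2 * ν * a) *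
          ∫ s in (0:ℝ)..(b - a), Real.exp (2 * ν * s) * ‖u (s + a) - v (s + a)‖ ^ 2
          = ∫ s in (0:ℝ)..(b - a), f (s + a) := by
        rw [← intervalIntegral.integral_const_mul]
        apply intervalIntegral.integral_congr
        intro s _
        simp only [hfdef]
        rw [← mul_assoc, ← Real.exp_add]
        ring_nf
      have step2 : (∫ s in (0:ℝ)..(b - a), f (s + a)) = ∫ t in a..b, f t := by
        rw [intervalIntegral.integral_comp_add_right f a]
        norm_num
      rw [show Real.exp (2 * ν * a) *
          (-δ * ∫ s in (0:ℝ)..(b - a), Real.exp (2 * ν * s) * ‖u (s + a) - v (s + a)‖ ^ 2)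
          = -δ * (Real.exp (2 * ν * a) *
            ∫ s in (0:ℝ)..(b - a), Real.exp (2 * ν * s) * ‖u (s + a) - v (s + a)‖ ^ 2) by ring,
        step1, step2]
    have hL : Real.exp (2 * ν * a) *
        (Real.exp (2 * ν * (b - a)) * ⟪P (u b - v b), u b - v b⟫ -
          ⟪P (u a - v a), u a - v a⟫) = g b - g a := by
      simp only [hgdef]
      rw [mul_sub, ← mul_assoc, ← Real.exp_add]
      ring_nf
    rw [hL, hI] at h2
    exact h2
  have hg0 : g 0 = 0 := by
    simp only [hgdef, hw0, inner_zero_right, mul_zero]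
  have hgP : ∀ a : ℝ, g a ≤ ‖P‖ * f a := by
    intro a
    have h1 : ⟪P (u a - v a), u a - v a⟫ ≤ ‖P‖ * ‖u a - v a‖ ^ 2 := by
      calc ⟪P (u a - v a), u a - v a⟫ ≤ ‖P (u a - v a)‖ * ‖u a - v a‖ :=
            real_inner_le_norm _ _
        _ ≤ (‖P‖ * ‖u a - v a‖) * ‖u a - v a‖ :=
            mul_le_mul_of_nonneg_right (P.le_opNorm _) (norm_nonneg _)
        _ = ‖P‖ * ‖u a - v a‖ ^ 2 := by ring
    have hE := (Real.exp_pos (2 * ν * a)).le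
    have := mul_le_mul_of_nonneg_left h1 hE
    simp only [hgdef, hfdef]
    nlinarith [this]
  have key2 : ∀ a : ℝ, a ≤ 0 → δ * ∫ t in a..0, f t ≤ ‖P‖ * f a := by
    intro a ha
    have h1 := hkey a 0 ha
    rw [hg0] at h1
    have := hgP a
    linarith
  set J : ℝ := ∫ x in Set.Iic (0:ℝ), f x with hJdef
  have hJnn : 0 ≤ J := setIntegral_nonneg measurableSet_Iic fun x _ => hf_nonneg x
  have hJ : J = 0 := by
    by_contra hne
    have hJpos : 0 < J := lt_of_le_of_ne hJnn (Ne.symm hne)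
    have htend : Tendsto (fun a : ℝ => ∫ t in a..0, f t) atBot (𝓝 J) :=
      intervalIntegral_tendsto_integral_Iic 0 hf_int tendsto_id
    have hev : ∀ᶠ a in atBot, J / 2 < ∫ t in a..0, f t :=
      htend.eventually (eventually_gt_nhds (by linarith))
    have hev2 : ∀ᶠ a in atBot, δ * (J / 2) ≤ ‖P‖ * f a := by
      filter_upwards [hev, eventually_le_atBot (0:ℝ)] with a h₁ h₂
      have h₃ := key2 a h₂
      nlinarith
    have hPpos : 0 < ‖P‖ := by
      obtain ⟨a, ha⟩ := hev2.exists
      by_contra hP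
      push_neg at hP
      nlinarith [mul_nonpos_of_nonpos_of_nonneg hP (hf_nonneg a)]
    set c : ℝ := δ * (J / 2) / ‖P‖ with hc
    have hcpos : 0 < c := div_pos (mul_pos hδ (by linarith)) hPpos
    have hev3 : ∀ᶠ a in atBot, c ≤ f a := by
      filter_upwards [hev2] with a h
      rw [hc, div_le_iff₀ hPpos, mul_comm (f a) ‖P‖]
      exact h
    obtain ⟨A, hA⟩ := eventually_atBot.mp hev3
    set A' : ℝ := min A 0 with hA'
    have hintA : IntegrableOn f (Set.Iic A') :=
      hf_int.mono_set (Iic_subset_Iic.mpr (min_le_right A 0))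
    have hconst : IntegrableOn (fun _ : ℝ => c) (Set.Iic A') := by
      refine Integrable.mono hintA aestronglyMeasurable_const ?_
      refine (ae_restrict_iff' measurableSet_Iic).mpr (Filter.Eventually.of_forall fun x hx => ?_)
      rw [Real.norm_eq_abs, Real.norm_eq_abs, abs_of_pos hcpos, abs_of_nonneg (hf_nonneg x)]
      exact hA x (le_trans hx (min_le_left A 0))
    rcases (integrableOn_const_iff (C := c)).mp hconst with h | h
    · exact hcpos.ne' (enorm_eq_zero.mp h)
    · rw [Real.volume_Iic] at h
      exact (lt_irrefl _ h)
  have hw_zero : ∀ t : ℝ, t ≤ 0 → u t - v t = 0 := by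
    intro t0 ht0
    by_contra hne
    have hft0 : 0 < f t0 := by
      apply mul_pos (Real.exp_pos _)
      have : 0 < ‖u t0 - v t0‖ := norm_pos_iff.mpr hne
      positivity
    rcases eq_or_lt_of_le ht0 with h | h
    · exact hne (h ▸ hw0)
    · have hev : ∀ᶠ s in 𝓝 t0, 0 < f s :=
        (hf_cont.continuousAt).eventually (eventually_gt_nhds hft0)
      obtain ⟨ε, hεpos, hball⟩ := Metric.eventually_nhds_iff.mp hev
      have hab : t0 - ε / 2 < t0 := by linarith
      have hpos : 0 < ∫ s in (t0 - ε / 2)..t0, f s := by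
        apply intervalIntegral.intervalIntegral_pos_of_pos_on
          (hf_cont.intervalIntegrable _ _) _ hab
        intro x hx
        apply hball
        obtain ⟨hx1, hx2⟩ := hx
        rw [Real.dist_eq, abs_lt]
        constructor <;> linarith
      have hle : (∫ s in (t0 - ε / 2)..t0, f s) ≤ J := by
        rw [intervalIntegral.integral_of_le hab.le]
        apply setIntegral_mono_set hf_int
          (Filter.Eventually.of_forall fun x => hf_nonneg x)
        refine HasSubset.Subset.eventuallyLE ?_
        intro x hx
        exact le_trans hx.2 ht0
      linarith
  funext t
  rcases le_or_gt t 0 with ht | ht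
  · exact sub_eq_zero.mp (hw_zero t ht)
  · have hu' := hu.2 t 0 ht.le
    have hv' := hv.2 t 0 ht.le
    rw [add_zero] at hu' hv'
    rw [hu', hv', h0]


end Defs

def circleFlow (σ : ℝ) : ℝ → AddCircle σ → AddCircle σ := fun t θ => θ + (t : AddCircle σ)

/-- Corollary 1: under (H1), (H3) and (H4), through every point of the amenable set
`𝔄(q)` there passes exactly one amenable complete trajectory at `q`. -/
theorem unique_amenable_trajectory
    {Q H : Type*} [MetricSpace Q] [NormedAddCommGroup H] [InnerProductSpace ℝ H]
    [CompleteSpace H] [TopologicalSpace.SeparableSpace H]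
    (ϑ : ℝ → Q → Q) (ψ : ℝ → Q → H → H)
    (hflow : IsFlow ϑ) (hcoc : IsCocycle ϑ ψ)
    (P : H →L[ℝ] H) (Hplus Hminus : Submodule ℝ H)
    (h1 : HypH1 P Hplus Hminus)
    (δ ν : ℝ) (h3 : HypH3 ψ P δ ν)
    (h4 : ∀ q : Q, (amenSet ϑ ψ ν q).Nonempty) :
    ∀ q : Q, ∀ u₀ ∈ amenSet ϑ ψ ν q,
      ∃! u : ℝ → H, IsCompleteTraj ϑ ψ q u ∧ IsAmenable ν u ∧ u 0 = u₀ := by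
  intro q u₀ hu₀
  obtain ⟨u, hu, hua, hu0⟩ := hu₀
  refine ⟨u, ⟨hu, hua, hu0⟩, ?_⟩
  rintro v ⟨hv, hva, hv0⟩
  exact amen_traj_eq ϑ ψ hcoc P δ ν h3 q v u hv hu hva hua (hv0.trans hu0.symm)
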